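/- arXiv:quant-ph/9810091 — 2 statements merged into one kernel-verified Lean document; each statement's English description precedes it below -/
import Mathlib

section
/- Let S = {|α_i⟩⊗|β_i⟩}_{i=1}^{|S|} be an unextendible product basis in H = H_A ⊗ H_B, and let ρ = (dim H − |S|)^{-1} (Id − Σ_i |α_i⟩⟨α_i| ⊗ |β_i⟩⟨β_i|) be the normalized projector onto H_S^⊥. Then ρ is an entangled density matrix, i.e., ρ cannot be written as a convex combination of pure product states. -/
open Matrix
open scoped BigOperators ComplexConjugate ComplexOrder

noncomputable section

def inC {ι : Type*} [Fintype ι] (x y : ι → ℂ) : ℂ := ∑ i, conj (x i) * y i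

def prodVec {ι κ : Type*} (a : ι → ℂ) (b : κ → ℂ) : ι × κ → ℂ := fun p => a p.1 * b p.2

def outer {ι : Type*} (x : ι → ℂ) : Matrix ι ι ℂ := Matrix.vecMulVec x (star x)

def ONFam {σ ι : Type*} [DecidableEq σ] [Fintype ι] (f : σ → ι → ℂ) : Prop :=
  ∀ i j, inC (f i) (f j) = if i = j then 1 else 0

def IsUPB {σ ιA ιB : Type*} [DecidableEq σ] [Fintype σ] [Fintype ιA] [Fintype ιB]
    (α : σ → ιA → ℂ) (β : σ → ιB → ℂ) : Prop :=
  ONFam (fun i => prodVec (α i) (β i)) ∧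
  Submodule.span ℂ (Set.range fun i => prodVec (α i) (β i)) ≠ ⊤ ∧
  ∀ (a : ιA → ℂ) (b : ιB → ℂ), a ≠ 0 → b ≠ 0 →
    (∀ i, inC (prodVec (α i) (β i)) (prodVec a b) = 0) → False

/-- A separable state: a nonnegative combination of pure product states. -/
def Separable {ιA ιB : Type*} [Fintype ιA] [Fintype ιB]
    (ρ : Matrix (ιA × ιB) (ιA × ιB) ℂ) : Prop :=
  ∃ (k : ℕ) (p : Fin k → ℝ) (a : Fin k → ιA → ℂ) (b : Fin k → ιB → ℂ),
    (∀ i, 0 ≤ p i) ∧ ρ = ∑ i, (p i : ℂ) • outer (prodVec (a i) (b i))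

/- ### auxiliary lemmas -/

lemma star_dot {ι : Type*} [Fintype ι] (x y : ι → ℂ) : star x ⬝ᵥ y = inC x y := by
  simp [dotProduct, inC, Pi.star_apply]

lemma outer_mulVec {ι : Type*} [Fintype ι] (u x : ι → ℂ) :
    outer u *ᵥ x = inC u x • u := by
  funext i
  simp only [outer, Matrix.mulVec, Matrix.vecMulVec_apply, dotProduct, inC,
    Pi.smul_apply, smul_eq_mul, Pi.star_apply, Finset.sum_mul, Finset.mul_sum]
  congr 1; ext k
  simp only [starRingEnd_apply]; ring

lemma outer_conjTranspose {ι : Type*} (x : ι → ℂ) : (outer x)ᴴ = outer x := by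
  ext i j
  simp [outer, Matrix.conjTranspose_apply, Matrix.vecMulVec_apply, mul_comm]

lemma outer_mul_outer {ι : Type*} [Fintype ι] (x y : ι → ℂ) :
    outer x * outer y = inC x y • Matrix.vecMulVec x (star y) := by
  ext i j
  simp only [outer, Matrix.mul_apply, Matrix.vecMulVec_apply, Matrix.smul_apply, smul_eq_mul,
    Pi.star_apply, inC]
  rw [Finset.sum_mul]
  congr 1; ext k
  simp only [starRingEnd_apply]; ring

lemma trace_outer {ι : Type*} [Fintype ι] (x : ι → ℂ) : (outer x).trace = inC x x := by
  simp [outer, Matrix.trace, Matrix.vecMulVec_apply, inC, mul_comm, Matrix.diag]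

lemma inC_conj {ι : Type*} [Fintype ι] (x y : ι → ℂ) : conj (inC x y) = inC y x := by
  simp [inC, map_sum, mul_comm]

lemma sum_mulVec' {ι κ : Type*} [Fintype ι] [Fintype κ] (A : κ → Matrix ι ι ℂ) (x : ι → ℂ) :
    (∑ i, A i) *ᵥ x = ∑ i, A i *ᵥ x := by
  funext j
  simp only [Matrix.mulVec, dotProduct, Finset.sum_apply, Matrix.sum_apply,
    Finset.sum_mul]
  rw [Finset.sum_comm]

lemma dot_sum' {ι κ : Type*} [Fintype ι] [Fintype κ] (v : ι → ℂ) (w : κ → ι → ℂ) :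
    v ⬝ᵥ (∑ i, w i) = ∑ i, v ⬝ᵥ w i := by
  simp [dotProduct, Finset.mul_sum, Finset.sum_apply]
  rw [Finset.sum_comm]

/-- the normalized projector onto the complement of a UPB is an
entangled density matrix. -/
theorem upb_state_is_entangled_density_matrix
    (m n s : ℕ) (α : Fin s → Fin m → ℂ) (β : Fin s → Fin n → ℂ)
    (hUPB : IsUPB α β) (hs : s < m * n)
    (ρ : Matrix (Fin m × Fin n) (Fin m × Fin n) ℂ)
    (hρ : ρ = ((m * n - s : ℕ) : ℂ)⁻¹ • (1 - ∑ i, outer (prodVec (α i) (β i)))) :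
    ρ.PosSemidef ∧ ρ.trace = 1 ∧ ¬ Separable ρ := by
  obtain ⟨hON, -, hfull⟩ := hUPB
  set u : Fin s → (Fin m × Fin n) → ℂ := fun i => prodVec (α i) (β i) with hu
  set P : Matrix (Fin m × Fin n) (Fin m × Fin n) ℂ := ∑ i, outer (u i) with hP
  set Q : Matrix (Fin m × Fin n) (Fin m × Fin n) ℂ := 1 - P with hQ
  set c : ℂ := ((m * n - s : ℕ) : ℂ) with hc
  have hON' : ∀ i j, inC (u i) (u j) = if i = j then 1 else 0 := hON
  have hPH : Pᴴ = P := by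
    rw [hP, Matrix.conjTranspose_sum]
    exact Finset.sum_congr rfl fun i _ => outer_conjTranspose _
  have hPP : P * P = P := by
    rw [hP, Finset.sum_mul]
    refine Finset.sum_congr rfl fun i _ => ?_
    rw [Finset.mul_sum, Finset.sum_eq_single i]
    · rw [outer_mul_outer, hON' i i, if_pos rfl, one_smul, outer]
    · intro j _ hj
      rw [outer_mul_outer, hON' i j, if_neg (Ne.symm hj), zero_smul]
    · intro h; exact absurd (Finset.mem_univ i) h
  have hQH : Qᴴ = Q := by
    rw [hQ, Matrix.conjTranspose_sub, hPH, Matrix.conjTranspose_one]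
  have hQ2 : Q * Q = Q := by
    rw [hQ, sub_mul, one_mul, mul_sub, mul_one, hPP]
    abel
  have hQpsd : Q.PosSemidef := by
    have h := Matrix.posSemidef_conjTranspose_mul_self Q
    rwa [hQH, hQ2] at h
  -- positivity of the scalar
  have hslt : s ≤ m * n := hs.le
  have hcpos : (0 : ℝ) < ((m * n - s : ℕ) : ℝ) := by
    have : 0 < m * n - s := Nat.sub_pos_of_lt hs
    exact_mod_cast this
  have hcR : c = (((m * n - s : ℕ) : ℝ) : ℂ) := by rw [hc]; push_cast; ring
  have hcinv_nonneg : (0 : ℂ) ≤ c⁻¹ := by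
    rw [hcR, ← Complex.ofReal_inv]
    exact_mod_cast (inv_nonneg.mpr hcpos.le)
  have hcne : c ≠ 0 := by
    rw [hcR]
    exact_mod_cast hcpos.ne'
  -- positive semidefiniteness
  have hpsd : ρ.PosSemidef := by
    constructor
    · show ρᴴ = ρ
      rw [hρ, Matrix.conjTranspose_smul, hQH]
      congr 1
      rw [hcR, ← Complex.ofReal_inv]
      simp [Complex.star_def]
    · intro x
      rw [hρ]
      exact (hQpsd.smul hcinv_nonneg).2 x
  -- trace
  have htrQ : Q.trace = c := by
    rw [hQ, Matrix.trace_sub, Matrix.trace_one, hP, Matrix.trace_sum]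
    have : ∀ i ∈ Finset.univ, (outer (u i)).trace = 1 := by
      intro i _
      rw [trace_outer, hON' i i, if_pos rfl]
    rw [Finset.sum_congr rfl this, Finset.sum_const, Finset.card_univ, Fintype.card_fin,
      nsmul_eq_mul, mul_one, hc, Nat.cast_sub hslt]
    simp
  have htr : ρ.trace = 1 := by
    rw [hρ, Matrix.trace_smul, htrQ, smul_eq_mul, inv_mul_cancel₀ hcne]
  refine ⟨hpsd, htr, ?_⟩
  -- non-separability
  rintro ⟨k, p, a, b, hp, heq⟩
  set w : Fin k → (Fin m × Fin n) → ℂ := fun i => prodVec (a i) (b i) with hw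
  -- ρ annihilates each UPB vector
  have hQv : ∀ j, Q *ᵥ u j = 0 := by
    intro j
    rw [hQ, Matrix.sub_mulVec, Matrix.one_mulVec, hP, sum_mulVec']
    have : ∀ i, outer (u i) *ᵥ u j = (if i = j then (1:ℂ) else 0) • u i := by
      intro i; rw [outer_mulVec, hON' i j]
    rw [Finset.sum_congr rfl fun i _ => this i]
    simp [Finset.sum_ite_eq]
  have hquad0 : ∀ j, star (u j) ⬝ᵥ (ρ *ᵥ u j) = 0 := by
    intro j
    rw [hρ, Matrix.smul_mulVec, hQv j]
    simp
  -- from the separable decomposition the quadratic form is a sum of nonnegatives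
  have hterm : ∀ j, ∑ i, ((p i * Complex.normSq (inC (u j) (w i)) : ℝ) : ℂ) = 0 := by
    intro j
    have hq := hquad0 j
    rw [heq, sum_mulVec'] at hq
    rw [show (∑ i, ((p i * Complex.normSq (inC (u j) (w i)) : ℝ) : ℂ))
        = ∑ i, star (u j) ⬝ᵥ (((p i : ℂ) • outer (w i)) *ᵥ u j) from ?_, ← dot_sum', hq]
    refine Finset.sum_congr rfl fun i _ => ?_
    rw [Matrix.smul_mulVec, dotProduct_smul, outer_mulVec,
      dotProduct_smul, star_dot, smul_eq_mul, smul_eq_mul]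
    have : inC (w i) (u j) * inC (u j) (w i)
        = (Complex.normSq (inC (u j) (w i)) : ℂ) := by
      rw [← inC_conj (u j) (w i), ← Complex.normSq_eq_conj_mul_self]
    rw [this]
    push_cast
    ring
  have hzero : ∀ j i, p i * Complex.normSq (inC (u j) (w i)) = 0 := by
    intro j i
    have h0 : ∑ i, p i * Complex.normSq (inC (u j) (w i)) = 0 := by
      have := hterm j
      exact_mod_cast (by push_cast at this ⊢; exact_mod_cast this : _)
    have hnn : ∀ i ∈ Finset.univ, 0 ≤ p i * Complex.normSq (inC (u j) (w i)) :=
      fun i _ => mul_nonneg (hp i) (Complex.normSq_nonneg _)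
    exact (Finset.sum_eq_zero_iff_of_nonneg hnn).1 h0 i (Finset.mem_univ i)
  -- every term in the decomposition vanishes
  have hρ0 : ρ = 0 := by
    rw [heq]
    refine Finset.sum_eq_zero fun i _ => ?_
    by_cases hpi : p i = 0
    · rw [hpi]; simp
    by_cases ha : a i = 0
    · have hw0 : prodVec (a i) (b i) = 0 := by funext q; simp [prodVec, ha]
      rw [hw0]
      ext q r
      simp [outer, Matrix.vecMulVec_apply]
    by_cases hb : b i = 0
    · have hw0 : prodVec (a i) (b i) = 0 := by funext q; simp [prodVec, hb]
      rw [hw0]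
      ext q r
      simp [outer, Matrix.vecMulVec_apply]
    exfalso
    refine hfull (a i) (b i) ha hb fun j => ?_
    have := hzero j i
    have hns : Complex.normSq (inC (u j) (w i)) = 0 := by
      rcases mul_eq_zero.1 this with h | h
      · exact absurd h hpi
      · exact h
    have : inC (u j) (w i) = 0 := Complex.normSq_eq_zero.1 hns
    simpa [hu, hw] using this
  rw [hρ0] at htr
  simp at htr
end
end

section
/- If S₁ is a UPB in H_A¹ ⊗ H_B¹ and S₂ is a UPB in H_A² ⊗ H_B², then the tensor product set S₁ ⊗ S₂ = {(|α_i¹⟩⊗|α_j²⟩) ⊗ (|β_i¹⟩⊗|β_j²⟩)} is a UPB in (H_A¹ ⊗ H_A²) ⊗ (H_B¹ ⊗ H_B²). -/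
open scoped BigOperators ComplexConjugate

noncomputable section

/- ## Auxiliary lemmas -/

lemma inC_prod {ι κ : Type*} [Fintype ι] [Fintype κ] (x u : ι → ℂ) (y v : κ → ℂ) :
    inC (prodVec x y) (prodVec u v) = inC x u * inC y v := by
  simp only [inC, prodVec, Fintype.sum_prod_type, Finset.sum_mul_sum, map_mul]
  exact Finset.sum_congr rfl fun i _ => Finset.sum_congr rfl fun j _ => by ring

lemma inC_self {ι : Type*} [Fintype ι] {v : ι → ℂ} (h : inC v v = 0) : v = 0 := by
  have hsum : ∑ i, Complex.normSq (v i) = 0 := by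
    have h2 : (↑(∑ i, Complex.normSq (v i)) : ℂ) = 0 := by
      push_cast
      rw [← h]
      exact Finset.sum_congr rfl fun i _ => by rw [← Complex.normSq_eq_conj_mul_self]
    exact_mod_cast h2
  funext i
  exact Complex.normSq_eq_zero.mp
    ((Finset.sum_eq_zero_iff_of_nonneg (fun i _ => Complex.normSq_nonneg (v i))).mp hsum i
      (Finset.mem_univ i))

lemma inC_eq_inner {ι : Type*} [Fintype ι] (x y : ι → ℂ) :
    inC x y = @inner ℂ (EuclideanSpace ℂ ι) _ (WithLp.toLp 2 x) (WithLp.toLp 2 y) := by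
  simp [inC, PiLp.inner_apply, RCLike.inner_apply, mul_comm]

lemma exists_orth {ι : Type*} [Fintype ι] {S : Set (ι → ℂ)}
    (h : Submodule.span ℂ S ≠ ⊤) :
    ∃ w : ι → ℂ, w ≠ 0 ∧ ∀ v ∈ S, inC v w = 0 := by
  set K : Submodule ℂ (EuclideanSpace ℂ ι) :=
    (Submodule.span ℂ S).map (WithLp.linearEquiv 2 ℂ (ι → ℂ)).symm.toLinearMap with hK
  have hKne : K ≠ ⊤ := by
    intro hc
    apply h
    rw [eq_top_iff]
    intro x _
    have hx : WithLp.toLp 2 x ∈ K := hc ▸ Submodule.mem_top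
    obtain ⟨y, hy, hyx⟩ := Submodule.mem_map.mp hx
    have : y = x := congrArg WithLp.ofLp hyx
    exact this ▸ hy
  have hbot : Kᗮ ≠ ⊥ := fun hb => hKne (Submodule.orthogonal_eq_bot_iff.mp hb)
  obtain ⟨w, hwK, hw0⟩ := Submodule.exists_mem_ne_zero_of_ne_bot hbot
  refine ⟨w.ofLp, fun h0 => hw0 (by ext i; simpa using congrFun h0 i), fun v hv => ?_⟩
  rw [inC_eq_inner]
  exact (Submodule.mem_orthogonal K w).mp hwK (WithLp.toLp 2 v)
    (Submodule.mem_map_of_mem (f := (WithLp.linearEquiv 2 ℂ (ι → ℂ)).symm.toLinearMap)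
      (Submodule.subset_span hv))

lemma not_top_of_orth {ι : Type*} [Fintype ι] {S : Set (ι → ℂ)} {w : ι → ℂ}
    (hw : w ≠ 0) (h : ∀ v ∈ S, inC v w = 0) :
    Submodule.span ℂ S ≠ ⊤ := by
  intro htop
  have key : ∀ v ∈ Submodule.span ℂ S, inC v w = 0 := by
    intro v hv
    induction hv using Submodule.span_induction with
    | mem v hv => exact h v hv
    | zero => simp [inC]
    | add x y _ _ hx hy =>
        simp only [inC, Pi.add_apply, map_add, add_mul, Finset.sum_add_distrib] at *
        rw [hx, hy, add_zero]
    | smul c x _ hx =>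
        simp only [inC, Pi.smul_apply, smul_eq_mul, map_mul, mul_assoc, ← Finset.mul_sum] at *
        rw [hx, mul_zero]
  exact hw (inC_self (key w (htop ▸ Submodule.mem_top)))

lemma inC_cross {ι₁ ι₂ κ₁ κ₂ : Type*} [Fintype ι₁] [Fintype ι₂] [Fintype κ₁] [Fintype κ₂]
    (u₁ w₁ : ι₁ × κ₁ → ℂ) (u₂ w₂ : ι₂ × κ₂ → ℂ) :
    inC (fun p : (ι₁ × ι₂) × (κ₁ × κ₂) => u₁ (p.1.1, p.2.1) * u₂ (p.1.2, p.2.2))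
        (fun p : (ι₁ × ι₂) × (κ₁ × κ₂) => w₁ (p.1.1, p.2.1) * w₂ (p.1.2, p.2.2)) =
      inC u₁ w₁ * inC u₂ w₂ := by
  have step : inC (fun p : (ι₁ × ι₂) × (κ₁ × κ₂) => u₁ (p.1.1, p.2.1) * u₂ (p.1.2, p.2.2))
        (fun p : (ι₁ × ι₂) × (κ₁ × κ₂) => w₁ (p.1.1, p.2.1) * w₂ (p.1.2, p.2.2)) =
      ∑ q : (ι₁ × κ₁) × (ι₂ × κ₂), (conj (u₁ q.1) * w₁ q.1) * (conj (u₂ q.2) * w₂ q.2) := by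
    rw [inC]
    exact (Fintype.sum_equiv (Equiv.prodProdProdComm ι₁ κ₁ ι₂ κ₂) _ _
      (fun q => by simp [Equiv.prodProdProdComm, map_mul]; ring)).symm
  rw [step, inC, inC, Finset.sum_mul_sum, ← Finset.univ_product_univ, Finset.sum_product]

lemma prodVec_cross {ι₁ ι₂ κ₁ κ₂ : Type*}
    (a : ι₁ → ℂ) (c : ι₂ → ℂ) (bb : κ₁ → ℂ) (d : κ₂ → ℂ) :
    prodVec (prodVec a c) (prodVec bb d) =
      fun pp : (ι₁ × ι₂) × (κ₁ × κ₂) =>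
        prodVec a bb (pp.1.1, pp.2.1) * prodVec c d (pp.1.2, pp.2.2) :=
  funext fun pp => by simp [prodVec]; ring

lemma inC_prodProd {ι₁ ι₂ κ₁ κ₂ : Type*} [Fintype ι₁] [Fintype ι₂] [Fintype κ₁] [Fintype κ₂]
    (a : ι₁ → ℂ) (c : ι₂ → ℂ) (bb : κ₁ → ℂ) (d : κ₂ → ℂ)
    (w₁ : ι₁ × κ₁ → ℂ) (w₂ : ι₂ × κ₂ → ℂ) :
    inC (prodVec (prodVec a c) (prodVec bb d))
        (fun pp : (ι₁ × ι₂) × (κ₁ × κ₂) => w₁ (pp.1.1, pp.2.1) * w₂ (pp.1.2, pp.2.2)) =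
      inC (prodVec a bb) w₁ * inC (prodVec c d) w₂ := by
  rw [prodVec_cross]
  exact inC_cross _ _ _ _

lemma inC_contract {ι₁ ι₂ κ₁ κ₂ : Type*} [Fintype ι₁] [Fintype ι₂] [Fintype κ₁] [Fintype κ₂]
    (x₁ : ι₁ → ℂ) (x₂ : ι₂ → ℂ) (y₁ : κ₁ → ℂ) (y₂ : κ₂ → ℂ)
    (a : ι₁ × ι₂ → ℂ) (b : κ₁ × κ₂ → ℂ) :
    inC (prodVec (prodVec x₁ x₂) (prodVec y₁ y₂)) (prodVec a b) =
      inC (prodVec x₁ y₁)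
        (prodVec (fun a₁ => ∑ a₂, conj (x₂ a₂) * a (a₁, a₂))
                 (fun b₁ => ∑ b₂, conj (y₂ b₂) * b (b₁, b₂))) := by
  have L : inC (prodVec (prodVec x₁ x₂) (prodVec y₁ y₂)) (prodVec a b) =
      ∑ q : (ι₁ × κ₁) × (ι₂ × κ₂),
        conj (x₁ q.1.1) * conj (y₁ q.1.2) * conj (x₂ q.2.1) * conj (y₂ q.2.2) *
          a (q.1.1, q.2.1) * b (q.1.2, q.2.2) := by
    rw [inC]
    exact (Fintype.sum_equiv (Equiv.prodProdProdComm ι₁ κ₁ ι₂ κ₂) _ _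
      (fun q => by simp [Equiv.prodProdProdComm, prodVec, map_mul]; ring)).symm
  rw [L, inC]
  simp only [Fintype.sum_prod_type, prodVec, map_mul, Finset.sum_mul_sum, Finset.mul_sum]
  refine Finset.sum_congr rfl fun a₁ _ => Finset.sum_congr rfl fun b₁ _ => ?_
  rw [Finset.sum_comm]
  refine Finset.sum_congr rfl fun b₂ _ => ?_
  rw [Finset.sum_mul, Finset.mul_sum]
  exact Finset.sum_congr rfl fun a₂ _ => by ring

/-- the tensor product of two UPBs (w.r.t. the bipartition
`A = A¹A²`, `B = B¹B²`) is again a UPB. -/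
theorem tensor_product_of_upbs_is_upb
    (m₁ n₁ s₁ m₂ n₂ s₂ : ℕ)
    (α₁ : Fin s₁ → Fin m₁ → ℂ) (β₁ : Fin s₁ → Fin n₁ → ℂ)
    (α₂ : Fin s₂ → Fin m₂ → ℂ) (β₂ : Fin s₂ → Fin n₂ → ℂ)
    (h₁ : IsUPB α₁ β₁) (h₂ : IsUPB α₂ β₂) :
    IsUPB (fun p : Fin s₁ × Fin s₂ => prodVec (α₁ p.1) (α₂ p.2))
          (fun p : Fin s₁ × Fin s₂ => prodVec (β₁ p.1) (β₂ p.2)) := by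
  obtain ⟨hON₁, hsp₁, hun₁⟩ := h₁
  obtain ⟨hON₂, hsp₂, hun₂⟩ := h₂
  refine ⟨?_, ?_, ?_⟩
  · -- orthonormality
    intro p q
    show inC (prodVec (prodVec (α₁ p.1) (α₂ p.2)) (prodVec (β₁ p.1) (β₂ p.2)))
        (prodVec (prodVec (α₁ q.1) (α₂ q.2)) (prodVec (β₁ q.1) (β₂ q.2))) = _
    rw [prodVec_cross (α₁ q.1) (α₂ q.2) (β₁ q.1) (β₂ q.2), inC_prodProd,
      hON₁ p.1 q.1, hON₂ p.2 q.2]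
    by_cases h1 : p.1 = q.1 <;> by_cases h2 : p.2 = q.2 <;>
      simp [h1, h2, Prod.ext_iff]
  · -- span is proper
    obtain ⟨w₁, hw₁0, hw₁⟩ := exists_orth hsp₁
    obtain ⟨w₂, hw₂0, hw₂⟩ := exists_orth hsp₂
    apply not_top_of_orth
      (w := fun pp : (Fin m₁ × Fin m₂) × (Fin n₁ × Fin n₂) =>
        w₁ (pp.1.1, pp.2.1) * w₂ (pp.1.2, pp.2.2))
    · obtain ⟨q₁, hq₁⟩ := Function.ne_iff.mp hw₁0
      obtain ⟨q₂, hq₂⟩ := Function.ne_iff.mp hw₂0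
      intro hW
      have := congrFun hW ((q₁.1, q₂.1), (q₁.2, q₂.2))
      simp only [Pi.zero_apply, mul_eq_zero] at this
      rcases this with h | h
      · exact hq₁ (by simpa using h)
      · exact hq₂ (by simpa using h)
    · rintro v ⟨p, rfl⟩
      show inC (prodVec (prodVec (α₁ p.1) (α₂ p.2)) (prodVec (β₁ p.1) (β₂ p.2))) _ = 0
      rw [inC_prodProd, hw₁ (prodVec (α₁ p.1) (β₁ p.1)) ⟨p.1, rfl⟩, zero_mul]
  · -- unextendibility
    intro a b ha hb horth
    by_cases hAB : ∃ j, (fun a₁ => ∑ a₂, conj (α₂ j a₂) * a (a₁, a₂)) ≠ 0 ∧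
        (fun b₁ => ∑ b₂, conj (β₂ j b₂) * b (b₁, b₂)) ≠ 0
    · obtain ⟨j, hA, hB⟩ := hAB
      refine hun₁ _ _ hA hB fun i => ?_
      have h := horth (i, j)
      rw [show (fun p : Fin s₁ × Fin s₂ => prodVec (α₁ p.1) (α₂ p.2)) (i, j)
          = prodVec (α₁ i) (α₂ j) from rfl,
        show (fun p : Fin s₁ × Fin s₂ => prodVec (β₁ p.1) (β₂ p.2)) (i, j)
          = prodVec (β₁ i) (β₂ j) from rfl, inC_contract] at h
      exact h
    · push_neg at hAB
      obtain ⟨⟨a₁, a₂⟩, ha'⟩ := Function.ne_iff.mp ha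
      obtain ⟨⟨b₁, b₂⟩, hb'⟩ := Function.ne_iff.mp hb
      have ha'' : (fun x => a (a₁, x)) ≠ 0 := fun h => ha' (by simpa using congrFun h a₂)
      have hb'' : (fun x => b (b₁, x)) ≠ 0 := fun h => hb' (by simpa using congrFun h b₂)
      refine hun₂ (fun x => a (a₁, x)) (fun x => b (b₁, x)) ha'' hb'' fun j => ?_
      rw [inC_prod]
      by_cases hA : (fun a₁ => ∑ a₂, conj (α₂ j a₂) * a (a₁, a₂)) = 0
      · have : inC (α₂ j) (fun x => a (a₁, x)) = 0 := congrFun hA a₁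
        rw [this, zero_mul]
      · have hB := hAB j hA
        have : inC (β₂ j) (fun x => b (b₁, x)) = 0 := congrFun hB b₁
        rw [this, mul_zero]
end
end
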